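/- Let R be a commutative ring, E₀ and E₁ two R-modules, and m ∈ ℕ. Write E(false) = E₀ and E(true) = E₁. Then there is an R-linear isomorphism ⨂_{j ∈ Fin m} (E₀ ⊕ E₁) ≅ ⨁_{f : Fin m → Bool} ⨂_{j ∈ Fin m} E(f j), and this isomorphism is Perm (Fin m)-equivariant, where Perm (Fin m) acts on the left by permuting the tensor factors, and on the right a permutation σ carries the summand indexed by f to the summand indexed by f ∘ σ⁻¹ by permuting the tensor factors accordingly. (This is the decomposition (E₀ ⊕ E₁)^{⊠ m} ≅ ⊕_{i=0}^m W_i used to prove additivity of the paper's power operation τ.) -/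

import Mathlib

open Equiv TensorProduct PiTensorProduct DirectSum

/-- For a permutation `σ` of `Fin m`, the linear endomorphism of
`⨁ (f : Fin m → Bool), ⨂ (j : Fin m), E (f j)` carrying the summand indexed by `f` to the
summand indexed by `f ∘ σ⁻¹` by permuting the tensor factors accordingly. -/
noncomputable def sumPermAction (R : Type*) [CommRing R] (m : ℕ) (E : Bool → Type*)
    [∀ b, AddCommGroup (E b)] [∀ b, Module R (E b)] (σ : Equiv.Perm (Fin m)) :
    (⨁ (f : Fin m → Bool), ⨂[R] j : Fin m, E (f j)) →ₗ[R]
      ⨁ (f : Fin m → Bool), ⨂[R] j : Fin m, E (f j) :=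
  DirectSum.toModule R _ _ fun f =>
    (DirectSum.lof R (Fin m → Bool) (fun f => ⨂[R] j : Fin m, E (f j))
        (fun j => f (σ.symm j))).comp
      (PiTensorProduct.reindex R (fun j => E (f j)) σ).toLinearMap
open Equiv TensorProduct PiTensorProduct DirectSum

section Aux

variable (R : Type*) [CommRing R] (E : Bool → Type*)
    [∀ b, AddCommGroup (E b)] [∀ b, Module R (E b)]

noncomputable def projAux : ∀ b : Bool, (E false × E true) →ₗ[R] E b
  | false => LinearMap.fst R (E false) (E true)
  | true => LinearMap.snd R (E false) (E true)

noncomputable def inclAux : ∀ b : Bool, E b →ₗ[R] (E false × E true)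
  | false => LinearMap.inl R (E false) (E true)
  | true => LinearMap.inr R (E false) (E true)

lemma proj_incl (b : Bool) (x : E b) : projAux R E b (inclAux R E b x) = x := by
  cases b <;> simp [projAux, inclAux]

lemma proj_incl_ne {b b' : Bool} (h : b ≠ b') (x : E b) :
    projAux R E b' (inclAux R E b x) = 0 := by
  cases b <;> cases b' <;> simp_all [projAux, inclAux]

lemma incl_proj_sum (v : E false × E true) :
    ∑ b : Bool, inclAux R E b (projAux R E b v) = v := by
  simp [projAux, inclAux, Prod.ext_iff]

variable (m : ℕ)

noncomputable def fwdAux : (⨂[R] _j : Fin m, (E false × E true)) →ₗ[R]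
    ⨁ (f : Fin m → Bool), ⨂[R] j : Fin m, E (f j) :=
  PiTensorProduct.lift (∑ f : Fin m → Bool,
    (DirectSum.lof R (Fin m → Bool) (fun f => ⨂[R] j : Fin m, E (f j)) f).compMultilinearMap
      ((PiTensorProduct.tprod R (s := fun j => E (f j))).compLinearMap fun j => projAux R E (f j)))

noncomputable def bwdAux : (⨁ (f : Fin m → Bool), ⨂[R] j : Fin m, E (f j)) →ₗ[R]
    ⨂[R] _j : Fin m, (E false × E true) :=
  DirectSum.toModule R _ _ fun f => PiTensorProduct.map fun j => inclAux R E (f j)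

lemma fwdAux_tprod (v : Fin m → E false × E true) :
    fwdAux R E m (tprod R v) = ∑ f : Fin m → Bool,
      DirectSum.lof R (Fin m → Bool) (fun f => ⨂[R] j : Fin m, E (f j)) f
        (tprod R fun j => projAux R E (f j) (v j)) := by
  simp [fwdAux]

lemma bwdAux_lof (f : Fin m → Bool) (w : ∀ j, E (f j)) :
    bwdAux R E m (DirectSum.lof R (Fin m → Bool) (fun f => ⨂[R] j : Fin m, E (f j)) f
      (tprod R w)) = tprod R fun j => inclAux R E (f j) (w j) := by
  simp [bwdAux]

lemma bwd_fwd : (bwdAux R E m).comp (fwdAux R E m) = LinearMap.id := by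
  apply PiTensorProduct.ext
  ext v
  simp only [LinearMap.compMultilinearMap_apply, LinearMap.comp_apply, LinearMap.id_apply,
    fwdAux_tprod, map_sum, bwdAux_lof]
  conv_rhs => rw [show v = fun j => ∑ b : Bool, inclAux R E b (projAux R E b (v j)) by
    funext j; rw [incl_proj_sum]]
  rw [MultilinearMap.map_sum]

lemma fwd_bwd : (fwdAux R E m).comp (bwdAux R E m) = LinearMap.id := by
  apply DirectSum.linearMap_ext
  intro f
  apply PiTensorProduct.ext
  ext w
  simp only [LinearMap.compMultilinearMap_apply, LinearMap.comp_apply, LinearMap.id_apply,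
    bwdAux_lof, fwdAux_tprod]
  rw [Finset.sum_eq_single f]
  · congr 1
    rw [show (fun j => projAux R E (f j) (inclAux R E (f j) (w j))) = w from
      funext fun j => proj_incl R E (f j) (w j)]
  · intro g _ hg
    obtain ⟨j, hj⟩ := Function.ne_iff.mp hg
    rw [(PiTensorProduct.tprod R).map_coord_zero j (proj_incl_ne R E (Ne.symm hj) (w j)), map_zero]
  · intro h; exact absurd (Finset.mem_univ f) h

end Aux

lemma equivariantAux (R : Type*) [CommRing R] (m : ℕ) (E : Bool → Type*)
    [∀ b, AddCommGroup (E b)] [∀ b, Module R (E b)] (σ : Equiv.Perm (Fin m)) :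
    (fwdAux R E m).comp
        (PiTensorProduct.reindex R (fun _ : Fin m => E false × E true) σ).toLinearMap
      = (sumPermAction R m E σ).comp (fwdAux R E m) := by
  apply PiTensorProduct.ext
  ext1 v
  simp only [LinearMap.compMultilinearMap_apply, LinearMap.comp_apply,
    LinearEquiv.coe_coe, reindex_tprod, fwdAux_tprod, map_sum, sumPermAction,
    DirectSum.toModule_lof]
  exact Eq.symm (Fintype.sum_equiv (Equiv.arrowCongr σ (Equiv.refl Bool)) _ _ fun f => rfl)

theorem statement5 (R : Type*) [CommRing R] (m : ℕ) (E : Bool → Type*)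
    [∀ b, AddCommGroup (E b)] [∀ b, Module R (E b)] :
    ∃ Φ : (⨂[R] _j : Fin m, (E false × E true)) ≃ₗ[R]
        ⨁ (f : Fin m → Bool), ⨂[R] j : Fin m, E (f j),
      ∀ (σ : Equiv.Perm (Fin m)) (x : ⨂[R] _j : Fin m, (E false × E true)),
        Φ (PiTensorProduct.reindex R (fun _ : Fin m => E false × E true) σ x) =
          sumPermAction R m E σ (Φ x) := by
  refine ⟨LinearEquiv.ofLinear (fwdAux R E m) (bwdAux R E m) (fwd_bwd R E m) (bwd_fwd R E m),
    fun σ x => ?_⟩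
  exact DFunLike.congr_fun (equivariantAux R m E σ) x
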